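/- arXiv:2002.10452 — 5 statements merged into one kernel-verified Lean document; each statement's English description precedes it below -/
import Mathlib

section
/- Let n ≥ 1, let J ⊆ ℝ be an interval, let g, f_1, …, f_n : ℝ^{2n} → ℝ be continuous, and let (x, y) : J → ℝ^n × ℝ^n be a C¹ solution on J of the Eulerian system ẋ_i = g(x,y)·x_i − f_i(x,y)·y_i, ẏ_i = g(x,y)·y_i + f_i(x,y)·x_i, and let t₀ ∈ J. Then for each index i ∈ {1,…,n}: if (x_i(t₀), y_i(t₀)) = (0,0) then (x_i(t), y_i(t)) = (0,0) for every t ∈ J, and if (x_i(t₀), y_i(t₀)) ≠ (0,0) then (x_i(t), y_i(t)) ≠ (0,0) for every t ∈ J. (Hence each primary cell M_{k,σ}, determined by which coordinate pairs vanish, is invariant under all Eulerian flows.) -/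
open Set Real

lemma key_le (r c : ℝ → ℝ) {J : Set ℝ}
    (hr : ∀ t ∈ J, HasDerivWithinAt r (c t * r t) J t)
    (hc : ContinuousOn c J)
    {a b : ℝ} (hab : a ≤ b) (hsub : Icc a b ⊆ J) (ha : r a = 0) : r b = 0 := by
  obtain ⟨K, hK⟩ := (isCompact_Icc (a := a) (b := b)).exists_bound_of_continuousOn
    (hc.mono hsub)
  have hcont : ContinuousOn r (Icc a b) := fun t ht =>
    ((hr t (hsub ht)).continuousWithinAt).mono hsub
  have hderiv : ∀ t ∈ Ico a b, HasDerivWithinAt r (c t * r t) (Ici t) t := by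
    intro t ht
    have h1 : HasDerivWithinAt r (c t * r t) (Icc t b) t :=
      (hr t (hsub (Ico_subset_Icc_self ht))).mono (fun s hs => hsub ⟨le_trans ht.1 hs.1, hs.2⟩)
    apply h1.mono_of_mem_nhdsWithin
    rw [show Icc t b = Ici t ∩ Iic b from Set.Ici_inter_Iic.symm]
    exact inter_mem_nhdsWithin _ (Iic_mem_nhds ht.2)
  have := norm_le_gronwallBound_of_norm_deriv_right_le (δ := 0) (K := K) (ε := 0)
    hcont hderiv (by simp [ha]) (fun t ht => by
      rw [norm_mul]
      have h2 := hK t (Ico_subset_Icc_self ht)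
      calc ‖c t‖ * ‖r t‖ ≤ K * ‖r t‖ := by
              exact mul_le_mul_of_nonneg_right h2 (norm_nonneg _)
        _ ≤ K * ‖r t‖ + 0 := by simp)
  have hb := this b ⟨hab, le_refl b⟩
  rw [gronwallBound_ε0_δ0] at hb
  simpa using le_antisymm hb (norm_nonneg _)

lemma key (r c : ℝ → ℝ) {J : Set ℝ} (hJ : J.OrdConnected)
    (hr : ∀ t ∈ J, HasDerivWithinAt r (c t * r t) J t)
    (hc : ContinuousOn c J)
    {a b : ℝ} (haJ : a ∈ J) (hbJ : b ∈ J) (ha : r a = 0) : r b = 0 := by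
  rcases le_total a b with hab | hab
  · exact key_le r c hr hc hab (fun s hs => hJ.out haJ hbJ hs) ha
  · -- reverse time
    set J' : Set ℝ := Neg.neg ⁻¹' J with hJ'
    have hrev : ∀ t ∈ J', HasDerivWithinAt (fun s => r (-s)) ((-c (-t)) * r (-(t)) ) J' t := by
      intro t ht
      have h1 := (hr (-t) ht).scomp t (hasDerivWithinAt_neg t J')
        (fun s hs => hs)
      simpa [mul_comm, Function.comp_def] using h1
    have hrev' : ∀ t ∈ J', HasDerivWithinAt (fun s => r (-s)) ((fun u => -c (-u)) t * (fun s => r (-s)) t) J' t := hrev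
    have hcc : ContinuousOn (fun u => -c (-u)) J' :=
      (hc.comp continuousOn_neg (fun s hs => hs)).neg
    have := key_le (fun s => r (-s)) (fun u => -c (-u)) hrev' hcc
      (neg_le_neg hab) ?_ (by simpa using ha)
    · simpa using this
    · intro s hs
      have : -s ∈ Icc b a := by
        constructor <;> [linarith [hs.2]; linarith [hs.1]]
      exact hJ.out hbJ haJ this

/-- **Invariance of the primary cells under Eulerian flows.**
For an Eulerian system `ẋᵢ = g(x,y)·xᵢ − fᵢ(x,y)·yᵢ`, `ẏᵢ = g(x,y)·yᵢ + fᵢ(x,y)·xᵢ`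
on an interval `J`, if the `i`-th coordinate pair vanishes at some `t₀ ∈ J` then it
vanishes on all of `J`, and if it is nonzero at `t₀` then it is nonzero on all of `J`. -/
theorem eulerian_cell_invariance
    (n : ℕ) (hn : 1 ≤ n) (J : Set ℝ) (hJ : J.OrdConnected)
    (g : ((Fin n → ℝ) × (Fin n → ℝ)) → ℝ)
    (f : Fin n → ((Fin n → ℝ) × (Fin n → ℝ)) → ℝ)
    (hg : Continuous g) (hf : ∀ i, Continuous (f i))
    (x y : ℝ → Fin n → ℝ)
    (hx : ∀ t ∈ J, ∀ i : Fin n, HasDerivWithinAt (fun s => x s i)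
      (g (x t, y t) * x t i - f i (x t, y t) * y t i) J t)
    (hy : ∀ t ∈ J, ∀ i : Fin n, HasDerivWithinAt (fun s => y s i)
      (g (x t, y t) * y t i + f i (x t, y t) * x t i) J t)
    (t₀ : ℝ) (ht₀ : t₀ ∈ J) (i : Fin n) :
    ((x t₀ i = 0 ∧ y t₀ i = 0) → ∀ t ∈ J, x t i = 0 ∧ y t i = 0) ∧
    (¬ (x t₀ i = 0 ∧ y t₀ i = 0) → ∀ t ∈ J, ¬ (x t i = 0 ∧ y t i = 0)) := by
  set r : ℝ → ℝ := fun t => x t i ^ 2 + y t i ^ 2 with hrdef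
  set c : ℝ → ℝ := fun t => 2 * g (x t, y t) with hcdef
  have hderiv : ∀ t ∈ J, HasDerivWithinAt r (c t * r t) J t := by
    intro t ht
    have h1 := ((hx t ht i).pow 2).add ((hy t ht i).pow 2)
    convert h1 using 1
    · rfl
    · rfl
    · rfl
    simp only [hcdef, hrdef, Nat.cast_ofNat]
    ring
  have hcont : ContinuousOn c J := by
    have hxc : ∀ j, ContinuousOn (fun t => x t j) J := fun j t ht =>
      (hx t ht j).continuousWithinAt
    have hyc : ∀ j, ContinuousOn (fun t => y t j) J := fun j t ht =>
      (hy t ht j).continuousWithinAt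
    have : ContinuousOn (fun t => (x t, y t)) J :=
      ContinuousOn.prodMk (continuousOn_pi.2 hxc) (continuousOn_pi.2 hyc)
    exact (continuousOn_const.mul (hg.comp_continuousOn this))
  have hzero : ∀ t, r t = 0 ↔ (x t i = 0 ∧ y t i = 0) := by
    intro t
    constructor
    · intro h
      have h1 : x t i ^ 2 = 0 ∧ y t i ^ 2 = 0 :=
        (add_eq_zero_iff_of_nonneg (sq_nonneg _) (sq_nonneg _)).1 h
      exact ⟨pow_eq_zero_iff (by norm_num) |>.1 h1.1, pow_eq_zero_iff (by norm_num) |>.1 h1.2⟩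
    · rintro ⟨h1, h2⟩; simp [hrdef, h1, h2]
  constructor
  · rintro h t ht
    exact (hzero t).1 (key r c hJ hderiv hcont ht₀ ht ((hzero t₀).2 h))
  · rintro h t ht hcontra
    exact h ((hzero t₀).1 (key r c hJ hderiv hcont ht ht₀ ((hzero t).2 hcontra)))
end

section
/- Let n ≥ 1, let J ⊆ ℝ be an interval, let g, f_1, …, f_n : ℝ^{2n} → ℝ be continuous, and let (x, y) : J → ℝ^n × ℝ^n be a C¹ solution on J of the Eulerian system ẋ_i = g(x,y)·x_i − f_i(x,y)·y_i, ẏ_i = g(x,y)·y_i + f_i(x,y)·x_i. Then for all indices i, j ∈ {1,…,n} and all s, t ∈ J: (x_i(t)² + y_i(t)²)·(x_j(s)² + y_j(s)²) = (x_j(t)² + y_j(t)²)·(x_i(s)² + y_i(s)²). (Hence the ratios of the radial amplitudes are conserved and every leaf M^C_{k,σ} = {x : c_j‖(x_{σ(i)},y_{σ(i)})‖ = c_i‖(x_{σ(j)},y_{σ(j)})‖} is invariant under all Eulerian flows.) -/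
/-- **Conservation of amplitude ratios along Eulerian flows.**
Along any solution of the Eulerian system
`ẋᵢ = g(x,y)·xᵢ − fᵢ(x,y)·yᵢ`, `ẏᵢ = g(x,y)·yᵢ + fᵢ(x,y)·xᵢ` on an interval `J`,
the ratios of the radial amplitudes `xᵢ² + yᵢ²` are conserved:
`(xᵢ(t)²+yᵢ(t)²)(xⱼ(s)²+yⱼ(s)²) = (xⱼ(t)²+yⱼ(t)²)(xᵢ(s)²+yᵢ(s)²)`. -/
theorem eulerian_leaf_invariance
    (n : ℕ) (hn : 1 ≤ n) (J : Set ℝ) (hJ : J.OrdConnected)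
    (g : ((Fin n → ℝ) × (Fin n → ℝ)) → ℝ)
    (f : Fin n → ((Fin n → ℝ) × (Fin n → ℝ)) → ℝ)
    (hg : Continuous g) (hf : ∀ i, Continuous (f i))
    (x y : ℝ → Fin n → ℝ)
    (hx : ∀ t ∈ J, ∀ i : Fin n, HasDerivWithinAt (fun s => x s i)
      (g (x t, y t) * x t i - f i (x t, y t) * y t i) J t)
    (hy : ∀ t ∈ J, ∀ i : Fin n, HasDerivWithinAt (fun s => y s i)
      (g (x t, y t) * y t i + f i (x t, y t) * x t i) J t) :
    ∀ (i j : Fin n), ∀ s ∈ J, ∀ t ∈ J,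
      ((x t i) ^ 2 + (y t i) ^ 2) * ((x s j) ^ 2 + (y s j) ^ 2) =
      ((x t j) ^ 2 + (y t j) ^ 2) * ((x s i) ^ 2 + (y s i) ^ 2) := by
  intro i j s hs t ht
  set c : ℝ → ℝ := fun u => 2 * g (x u, y u) with hc_def
  -- continuity of c on J
  have hxy_cont : ContinuousOn (fun u => ((x u, y u) : (Fin n → ℝ) × (Fin n → ℝ))) J := by
    intro b hb
    apply ContinuousWithinAt.prodMk
    · exact continuousWithinAt_pi.2 fun k => (hx b hb k).continuousWithinAt
    · exact continuousWithinAt_pi.2 fun k => (hy b hb k).continuousWithinAt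
  have hcont : ContinuousOn c J :=
    (continuous_const.mul hg).comp_continuousOn hxy_cont
  -- the compact interval between s and t
  set K : Set ℝ := Set.uIcc s t with hK_def
  have hKJ : K ⊆ J := hJ.uIcc_subset hs ht
  have hcK : ContinuousOn c K := hcont.mono hKJ
  -- the integral of c from s
  set I : ℝ → ℝ := fun u => ∫ v in s..u, c v with hI_def
  have hI : ∀ b ∈ K, HasDerivWithinAt I (c b) K b := by
    intro b hb
    haveI : Fact (b ∈ Set.uIcc s t) := ⟨hb⟩
    refine intervalIntegral.integral_hasDerivWithinAt_right ?_ ?_ (hcK b hb)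
    · exact (hcK.mono (Set.uIcc_subset_uIcc Set.left_mem_uIcc hb)).intervalIntegrable
    · exact ⟨K, self_mem_nhdsWithin, hcK.aestronglyMeasurable measurableSet_uIcc⟩
  -- the radial amplitudes
  set R : Fin n → ℝ → ℝ := fun k u => x u k ^ 2 + y u k ^ 2 with hR_def
  have hR : ∀ b ∈ J, ∀ k : Fin n, HasDerivWithinAt (R k) (c b * R k b) J b := by
    intro b hb k
    have h := ((hx b hb k).pow 2).add ((hy b hb k).pow 2)
    refine h.congr_deriv ?_
    simp only [hc_def, hR_def]
    ring
  -- the cross difference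
  set W : ℝ → ℝ := fun u => R i u * R j s - R j u * R i s with hW_def
  have hW : ∀ b ∈ K, HasDerivWithinAt W (c b * W b) K b := by
    intro b hb
    have h := (((hR b (hKJ hb) i).mono hKJ).mul_const (R j s)).sub
      (((hR b (hKJ hb) j).mono hKJ).mul_const (R i s))
    refine h.congr_deriv ?_
    simp only [hW_def]
    ring
  -- the integrating-factor function
  set F : ℝ → ℝ := fun u => W u * Real.exp (-(I u)) with hF_def
  have hF : ∀ b ∈ K, HasDerivWithinAt F 0 K b := by
    intro b hb
    have hE : HasDerivWithinAt (fun u => Real.exp (-(I u)))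
        (Real.exp (-(I b)) * -(c b)) K b := ((hI b hb).neg).exp
    have h := (hW b hb).mul hE
    refine h.congr_deriv ?_
    ring
  -- F is constant on K
  have hconst : ‖F t - F s‖ ≤ 0 * ‖t - s‖ :=
    Convex.norm_image_sub_le_of_norm_hasDerivWithin_le (f' := fun _ => 0)
      (fun b hb => hF b hb) (fun b _ => by simp) (convex_uIcc s t)
      Set.left_mem_uIcc Set.right_mem_uIcc
  have hFts : F t = F s := by
    have : ‖F t - F s‖ ≤ 0 := by simpa using hconst
    have := le_antisymm this (norm_nonneg _)
    rwa [norm_eq_zero, sub_eq_zero] at this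
  -- conclude
  have hWs : W s = 0 := by simp only [hW_def]; ring
  have hWt : W t = 0 := by
    have := hFts
    simp only [hF_def, hWs, zero_mul] at this
    exact (mul_eq_zero.1 this).resolve_right (Real.exp_ne_zero _)
  have := hWt
  simp only [hW_def, hR_def, sub_eq_zero] at this
  exact this
end

section
/- Let k ≥ 1, ν₀ > 0, a_1, …, a_k ∈ ℝ with a_j < 0 for all j, t₀ ∈ ℝ, and r⁰ ∈ ℝ^k with r⁰_k > 0. For t ≥ t₀ define r_i(t) = (r⁰_i / r⁰_k) · √( (−ν₀·(r⁰_k)²·exp(2ν₀(t − t₀))) / (Σ_{j=1}^k a_j·(r⁰_j)²·(exp(2ν₀(t − t₀)) − 1) − ν₀) ). Then for all t ≥ t₀ the denominator Σ_j a_j (r⁰_j)²(exp(2ν₀(t−t₀)) − 1) − ν₀ is negative (so r is well defined), r(t₀) = r⁰, and r is differentiable with r_i′(t) = r_i(t)·(ν₀ + Σ_{j=1}^k a_j·r_j(t)²) for all t ≥ t₀ and all i. (This is the explicit flow of the radial amplitude system used in the proof of orbital equivalence of the 2k-cell normal forms.) -/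
/-- The explicit radial flow of the truncated 2k-cell normal form
(`k = n+1`, with `Fin.last n` playing the role of the index `k`). -/
noncomputable def radialFlow (n : ℕ) (ν₀ t₀ : ℝ) (a r0 : Fin (n + 1) → ℝ)
    (i : Fin (n + 1)) (t : ℝ) : ℝ :=
  (r0 i / r0 (Fin.last n)) *
    Real.sqrt ((-ν₀ * (r0 (Fin.last n)) ^ 2 * Real.exp (2 * ν₀ * (t - t₀))) /
      ((∑ j, a j * (r0 j) ^ 2 * (Real.exp (2 * ν₀ * (t - t₀)) - 1)) - ν₀))


private lemma radial_aux (ν₀ S E D Q c K : ℝ) (hDne : D ≠ 0)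
    (hK : K ≠ 0) (hQpos : 0 < Q)
    (hQg : Q ^ 2 * D = -ν₀ * K ^ 2 * E) :
    c * ((-ν₀ * K ^ 2 * (E * (2 * ν₀)) * D - -ν₀ * K ^ 2 * E * (S * (E * (2 * ν₀)))) / D ^ 2 / (2 * Q))
    = c * Q * (ν₀ + S * Q ^ 2 / K ^ 2) := by
  field_simp
  linear_combination (-(c*ν₀*K^2*D) - c*S*(Q^2*D + (-ν₀*K^2*E))) * hQg

/-- **The explicit flow of the radial amplitude system.**
For `ν₀ > 0`, all `aⱼ < 0` and `r⁰` with last component positive, the formula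
`rᵢ(t) = (r⁰ᵢ/r⁰ₖ)·√(−ν₀(r⁰ₖ)²e^{2ν₀(t−t₀)} / (Σⱼ aⱼ(r⁰ⱼ)²(e^{2ν₀(t−t₀)} − 1) − ν₀))`
has negative denominator for all `t ≥ t₀` (so it is well defined), satisfies
`r(t₀) = r⁰`, and solves `rᵢ′ = rᵢ(ν₀ + Σⱼ aⱼ rⱼ²)` for `t ≥ t₀`. -/
theorem radial_flow_solves
    (n : ℕ) (ν₀ : ℝ) (hν : 0 < ν₀) (a : Fin (n + 1) → ℝ) (ha : ∀ j, a j < 0)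
    (t₀ : ℝ) (r0 : Fin (n + 1) → ℝ) (hr0 : 0 < r0 (Fin.last n)) :
    (∀ t ≥ t₀,
      (∑ j, a j * (r0 j) ^ 2 * (Real.exp (2 * ν₀ * (t - t₀)) - 1)) - ν₀ < 0) ∧
    (∀ i, radialFlow n ν₀ t₀ a r0 i t₀ = r0 i) ∧
    (∀ t ≥ t₀, ∀ i, HasDerivWithinAt (radialFlow n ν₀ t₀ a r0 i)
      (radialFlow n ν₀ t₀ a r0 i t *
        (ν₀ + ∑ j, a j * (radialFlow n ν₀ t₀ a r0 j t) ^ 2))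
      (Set.Ici t₀) t) := by
  have hk0 : r0 (Fin.last n) ≠ 0 := ne_of_gt hr0
  set S : ℝ := ∑ j, a j * (r0 j) ^ 2 with hS
  have hSle : S ≤ 0 :=
    Finset.sum_nonpos fun j _ => mul_nonpos_of_nonpos_of_nonneg (ha j).le (sq_nonneg _)
  have hsum : ∀ s : ℝ, (∑ j, a j * (r0 j) ^ 2 * (Real.exp (2 * ν₀ * (s - t₀)) - 1))
      = S * (Real.exp (2 * ν₀ * (s - t₀)) - 1) := fun s => by
    rw [hS, Finset.sum_mul]
  have hden : ∀ t ≥ t₀,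
      (∑ j, a j * (r0 j) ^ 2 * (Real.exp (2 * ν₀ * (t - t₀)) - 1)) - ν₀ < 0 := by
    intro t ht
    rw [hsum]
    have hE : (1:ℝ) ≤ Real.exp (2 * ν₀ * (t - t₀)) := by
      apply Real.one_le_exp
      have : 0 ≤ t - t₀ := sub_nonneg.2 ht
      positivity
    nlinarith [mul_nonpos_of_nonpos_of_nonneg hSle (sub_nonneg.2 hE)]
  -- abbreviations
  have hflow : ∀ (j : Fin (n+1)) (s : ℝ), radialFlow n ν₀ t₀ a r0 j s
      = (r0 j / r0 (Fin.last n)) *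
        Real.sqrt ((-ν₀ * (r0 (Fin.last n)) ^ 2 * Real.exp (2 * ν₀ * (s - t₀))) /
          (S * (Real.exp (2 * ν₀ * (s - t₀)) - 1) - ν₀)) := fun j s => by
    rw [radialFlow, hsum]
  refine ⟨hden, ?_, ?_⟩
  · intro i
    rw [hflow]
    have h0 : 2 * ν₀ * (t₀ - t₀) = 0 := by ring
    rw [h0, Real.exp_zero]
    have : (-ν₀ * (r0 (Fin.last n)) ^ 2 * 1) / (S * (1 - 1) - ν₀) = (r0 (Fin.last n)) ^ 2 := by
      field_simp
      rw [sub_self, mul_zero, zero_sub, div_neg, neg_neg, div_self hν.ne']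
    rw [this, Real.sqrt_sq hr0.le, div_mul_cancel₀ _ hk0]
  · intro t ht i
    set E : ℝ := Real.exp (2 * ν₀ * (t - t₀)) with hEdef
    have hE1 : (1:ℝ) ≤ E := by
      apply Real.one_le_exp
      have : 0 ≤ t - t₀ := sub_nonneg.2 ht
      positivity
    have hD : S * (E - 1) - ν₀ < 0 := by
      have := hden t ht; rwa [hsum] at this
    have hDne : S * (E - 1) - ν₀ ≠ 0 := ne_of_lt hD
    set g : ℝ := (-ν₀ * (r0 (Fin.last n)) ^ 2 * E) / (S * (E - 1) - ν₀) with hgdef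
    have hgpos : 0 < g := by
      apply div_pos_of_neg_of_neg
      · have : 0 < ν₀ * (r0 (Fin.last n)) ^ 2 * E := by positivity
        nlinarith
      · exact hD
    set Q : ℝ := Real.sqrt g with hQdef
    have hQpos : 0 < Q := Real.sqrt_pos.2 hgpos
    have hQsq : Q ^ 2 = g := Real.sq_sqrt hgpos.le
    -- the derivative of the exponential
    have hEd : HasDerivAt (fun s : ℝ => Real.exp (2 * ν₀ * (s - t₀))) (E * (2 * ν₀)) t := by
      have h1 : HasDerivAt (fun s : ℝ => 2 * ν₀ * (s - t₀)) (2 * ν₀) t := by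
        simpa using ((hasDerivAt_id t).sub_const t₀).const_mul (2 * ν₀)
      simpa using h1.exp
    have hNd : HasDerivAt (fun s : ℝ => -ν₀ * (r0 (Fin.last n)) ^ 2 * Real.exp (2 * ν₀ * (s - t₀)))
        (-ν₀ * (r0 (Fin.last n)) ^ 2 * (E * (2 * ν₀))) t := hEd.const_mul _
    have hDd : HasDerivAt (fun s : ℝ => S * (Real.exp (2 * ν₀ * (s - t₀)) - 1) - ν₀)
        (S * (E * (2 * ν₀))) t := by
      simpa using ((hEd.sub_const 1).const_mul S).sub_const ν₀
    have hgd : HasDerivAt (fun s : ℝ =>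
        (-ν₀ * (r0 (Fin.last n)) ^ 2 * Real.exp (2 * ν₀ * (s - t₀))) /
          (S * (Real.exp (2 * ν₀ * (s - t₀)) - 1) - ν₀))
        ((-ν₀ * (r0 (Fin.last n)) ^ 2 * (E * (2 * ν₀)) * (S * (E - 1) - ν₀)
          - (-ν₀ * (r0 (Fin.last n)) ^ 2 * E) * (S * (E * (2 * ν₀))))
          / (S * (E - 1) - ν₀) ^ 2) t := hNd.div hDd hDne
    have hQd : HasDerivAt (fun s : ℝ => Real.sqrt
        ((-ν₀ * (r0 (Fin.last n)) ^ 2 * Real.exp (2 * ν₀ * (s - t₀))) /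
          (S * (Real.exp (2 * ν₀ * (s - t₀)) - 1) - ν₀)))
        (((-ν₀ * (r0 (Fin.last n)) ^ 2 * (E * (2 * ν₀)) * (S * (E - 1) - ν₀)
          - (-ν₀ * (r0 (Fin.last n)) ^ 2 * E) * (S * (E * (2 * ν₀))))
          / (S * (E - 1) - ν₀) ^ 2) / (2 * Q)) t := hgd.sqrt (ne_of_gt hgpos)
    have hmain : HasDerivAt (radialFlow n ν₀ t₀ a r0 i)
        ((r0 i / r0 (Fin.last n)) *
          (((-ν₀ * (r0 (Fin.last n)) ^ 2 * (E * (2 * ν₀)) * (S * (E - 1) - ν₀)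
            - (-ν₀ * (r0 (Fin.last n)) ^ 2 * E) * (S * (E * (2 * ν₀))))
            / (S * (E - 1) - ν₀) ^ 2) / (2 * Q))) t := by
      have : radialFlow n ν₀ t₀ a r0 i = fun s =>
          (r0 i / r0 (Fin.last n)) * Real.sqrt
            ((-ν₀ * (r0 (Fin.last n)) ^ 2 * Real.exp (2 * ν₀ * (s - t₀))) /
              (S * (Real.exp (2 * ν₀ * (s - t₀)) - 1) - ν₀)) := funext fun s => hflow i s
      rw [this]
      exact hQd.const_mul _
    -- now identify the derivative value
    have hval : (r0 i / r0 (Fin.last n)) *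
          (((-ν₀ * (r0 (Fin.last n)) ^ 2 * (E * (2 * ν₀)) * (S * (E - 1) - ν₀)
            - (-ν₀ * (r0 (Fin.last n)) ^ 2 * E) * (S * (E * (2 * ν₀))))
            / (S * (E - 1) - ν₀) ^ 2) / (2 * Q))
        = radialFlow n ν₀ t₀ a r0 i t *
          (ν₀ + ∑ j, a j * (radialFlow n ν₀ t₀ a r0 j t) ^ 2) := by
      have hsum2 : (∑ j, a j * (radialFlow n ν₀ t₀ a r0 j t) ^ 2)
          = S * Q ^ 2 / (r0 (Fin.last n)) ^ 2 := by
        rw [hS, Finset.sum_mul, Finset.sum_div]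
        refine Finset.sum_congr rfl fun j _ => ?_
        rw [hflow, ← hEdef, ← hgdef, ← hQdef]
        field_simp
      have hQg : Q ^ 2 * (S * (E - 1) - ν₀) = -ν₀ * (r0 (Fin.last n)) ^ 2 * E := by
        rw [hQsq, hgdef, div_mul_cancel₀ _ hDne]
      rw [hsum2, hflow i t, ← hEdef, ← hgdef, ← hQdef]
      exact radial_aux ν₀ S E _ Q _ _ hDne hk0 hQpos hQg
    rw [hval] at hmain
    exact hmain.hasDerivWithinAt
end

section
/- Let n ≥ 1, ω_1, …, ω_n ∈ ℝ, ν₀ > 0, and a_1, …, a_n ∈ ℝ with a_j < 0 for all j, and define u(x, y) = ν₀ + Σ_{j=1}^n a_j·(x_j² + y_j²). Let (x, y) : [0, ∞) → ℝ^n × ℝ^n be a C¹ solution of the system ẋ_i = −ω_i·y_i + u(x,y)·x_i, ẏ_i = ω_i·x_i + u(x,y)·y_i with (x(0), y(0)) ≠ 0. Then u(x(t), y(t)) → 0 as t → ∞. (When all a_j < 0 and ν₀ > 0, the flow-invariant toral CW complex {u = 0} bifurcated from the origin at the variety T_{Pch} = {ν₀ = 0} is asymptotically stable: every nonzero solution approaches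 it.) -/
open Set Filter Topology


/-- Strict upper barrier: if `g 0 < c` and the derivative is negative whenever `g = c`,
then `g` stays below `c` on `[0, ∞)`. -/
lemma barrier_up {g d : ℝ → ℝ}
    (hg : ∀ t ≥ (0:ℝ), HasDerivWithinAt g (d t) (Set.Ici 0) t)
    {c : ℝ} (h0 : g 0 < c) (hd : ∀ t ≥ (0:ℝ), g t = c → d t < 0) :
    ∀ t ≥ (0:ℝ), g t < c := by
  by_contra h
  push_neg at h
  obtain ⟨t₀, ht₀, hct₀⟩ := h
  have hcont : ContinuousOn g (Set.Ici 0) := fun t ht => (hg t ht).continuousWithinAt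
  have hSclosed : IsClosed (Set.Ici (0:ℝ) ∩ g ⁻¹' Set.Ici c) :=
    hcont.preimage_isClosed_of_isClosed isClosed_Ici isClosed_Ici
  have hSne : (Set.Ici (0:ℝ) ∩ g ⁻¹' Set.Ici c).Nonempty := ⟨t₀, ht₀, hct₀⟩
  have hSbdd : BddBelow (Set.Ici (0:ℝ) ∩ g ⁻¹' Set.Ici c) := ⟨0, fun t ht => ht.1⟩
  set t₁ := sInf (Set.Ici (0:ℝ) ∩ g ⁻¹' Set.Ici c) with ht₁def
  have ht₁S : t₁ ∈ Set.Ici (0:ℝ) ∩ g ⁻¹' Set.Ici c := hSclosed.csInf_mem hSne hSbdd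
  have ht₁0 : (0:ℝ) ≤ t₁ := ht₁S.1
  have ht₁c : c ≤ g t₁ := ht₁S.2
  have ht₁pos : 0 < t₁ := by
    rcases eq_or_lt_of_le ht₁0 with h | h
    · exfalso; rw [← h] at ht₁c; linarith
    · exact h
  have hlt : ∀ t, 0 ≤ t → t < t₁ → g t < c := by
    intro t ht htlt
    by_contra hge
    push_neg at hge
    exact absurd (csInf_le hSbdd ⟨ht, hge⟩) (not_le.2 htlt)
  have hle : g t₁ ≤ c := by
    have hne : (𝓝[Set.Ioo 0 t₁] t₁).NeBot := right_nhdsWithin_Ioo_neBot ht₁pos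
    have htend : Filter.Tendsto g (𝓝[Set.Ioo 0 t₁] t₁) (𝓝 (g t₁)) :=
      (hcont t₁ ht₁0).mono (fun s hs => hs.1.le)
    refine le_of_tendsto htend ?_
    filter_upwards [self_mem_nhdsWithin] with s hs
    exact (hlt s hs.1.le hs.2).le
  have hgt₁ : g t₁ = c := le_antisymm hle ht₁c
  have hd₁ : d t₁ < 0 := hd t₁ ht₁0 hgt₁
  have hmax : IsMaxOn g (Set.Icc 0 t₁) t₁ := by
    intro s hs
    rcases eq_or_lt_of_le hs.2 with h | h
    · simp only [Set.mem_setOf_eq, h]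
      exact le_rfl
    · have := hlt s hs.1 h
      simp only [Set.mem_setOf_eq]
      linarith [hgt₁]
  have hderiv : HasDerivWithinAt g (d t₁) (Set.Icc 0 t₁) t₁ :=
    (hg t₁ ht₁0).mono (Set.Icc_subset_Ici_self)
  have hcone : (0:ℝ) - t₁ ∈ posTangentConeAt (Set.Icc 0 t₁) t₁ := by
    apply sub_mem_posTangentConeAt_of_segment_subset
    rw [segment_symm, segment_eq_Icc ht₁0]
  have hkey := hmax.localize.hasFDerivWithinAt_nonpos hderiv.hasFDerivWithinAt hcone
  simp only [ContinuousLinearMap.smulRight_apply, ContinuousLinearMap.one_apply,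
    ContinuousLinearMap.toSpanSingleton_apply, smul_eq_mul, zero_sub] at hkey
  nlinarith

lemma barrier_down {g d : ℝ → ℝ}
    (hg : ∀ t ≥ (0:ℝ), HasDerivWithinAt g (d t) (Set.Ici 0) t)
    {c : ℝ} (h0 : c < g 0) (hd : ∀ t ≥ (0:ℝ), g t = c → 0 < d t) :
    ∀ t ≥ (0:ℝ), c < g t := by
  have h := barrier_up (g := fun t => -g t) (d := fun t => -d t)
    (fun t ht => (hg t ht).neg) (c := -c) (by show -g 0 < -c; linarith)
    (fun t ht hc => by
      have hc2 : -g t = -c := hc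
      have : g t = c := by linarith
      have := hd t ht this
      show -d t < 0
      linarith)
  intro t ht
  have h2 : -g t < -c := h t ht
  linarith

lemma growth_lower {g d : ℝ → ℝ} {δ : ℝ}
    (hg : ∀ t ≥ (0:ℝ), HasDerivWithinAt g (d t) (Set.Ici 0) t)
    (hd : ∀ t ≥ (0:ℝ), δ ≤ d t) :
    ∀ t ≥ (0:ℝ), g 0 + δ * t ≤ g t := by
  have hlin : ∀ (S : Set ℝ) (t : ℝ), HasDerivWithinAt (fun s => δ * s) δ S t := by
    intro S t
    simpa using (hasDerivWithinAt_id t S).const_mul δ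
  have hmono : MonotoneOn (fun t => g t - δ * t) (Set.Ici 0) := by
    apply monotoneOn_of_hasDerivWithinAt_nonneg (convex_Ici 0)
      (f' := fun t => d t - δ)
    · exact fun t ht => ((hg t ht).sub (hlin _ t)).continuousWithinAt
    · intro t ht
      rw [interior_Ici] at ht ⊢
      exact ((hg t ht.le).sub (hlin _ t)).mono Set.Ioi_subset_Ici_self
    · intro t ht
      rw [interior_Ici] at ht
      linarith [hd t ht.le]
  intro t ht
  have := hmono (Set.self_mem_Ici) ht ht
  simp only [mul_zero, sub_zero] at this
  linarith

lemma growth_upper {g d : ℝ → ℝ} {δ : ℝ}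
    (hg : ∀ t ≥ (0:ℝ), HasDerivWithinAt g (d t) (Set.Ici 0) t)
    (hd : ∀ t ≥ (0:ℝ), d t ≤ -δ) :
    ∀ t ≥ (0:ℝ), g t ≤ g 0 - δ * t := by
  have h := growth_lower (g := fun t => -g t) (d := fun t => -d t)
    (fun t ht => (hg t ht).neg) (δ := δ)
    (fun t ht => by show δ ≤ -d t; linarith [hd t ht])
  intro t ht
  have h2 : -g 0 + δ * t ≤ -g t := h t ht
  linarith

lemma stay_le {U : ℝ → ℝ} {ν₀ : ℝ} (hν : 0 < ν₀)
    (hU : ∀ t ≥ (0:ℝ), HasDerivWithinAt U (2 * U t * (ν₀ + U t)) (Set.Ici 0) t)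
    (hUneg : ∀ t ≥ (0:ℝ), U t ≤ 0) (h0 : U 0 ≤ -ν₀) :
    ∀ t ≥ (0:ℝ), U t ≤ -ν₀ := by
  intro t ht
  by_contra h
  push_neg at h
  rcases lt_or_eq_of_le (hUneg t ht) with hlt | heq
  · exact absurd (barrier_up hU (c := U t) (by linarith)
      (fun s hs hse => by rw [hse]; nlinarith) t ht) (lt_irrefl _)
  · have := barrier_up hU (c := -ν₀/2) (by linarith)
      (fun s hs hse => by rw [hse]; nlinarith) t ht
    linarith [heq]

lemma stay_ge {U : ℝ → ℝ} {ν₀ : ℝ} (hν : 0 < ν₀)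
    (hU : ∀ t ≥ (0:ℝ), HasDerivWithinAt U (2 * U t * (ν₀ + U t)) (Set.Ici 0) t)
    (h0 : -ν₀ ≤ U 0) :
    ∀ t ≥ (0:ℝ), -ν₀ ≤ U t := by
  intro t ht
  by_contra h
  push_neg at h
  exact absurd (barrier_down hU (c := U t) (by linarith)
    (fun s hs hse => by rw [hse]; nlinarith) t ht) (lt_irrefl _)

lemma scalar_limit {U : ℝ → ℝ} {ν₀ : ℝ} (hν : 0 < ν₀)
    (hU : ∀ t ≥ (0:ℝ), HasDerivWithinAt U (2 * U t * (ν₀ + U t)) (Set.Ici 0) t)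
    (hUneg : ∀ t ≥ (0:ℝ), U t ≤ 0) (hU0 : U 0 < 0) :
    Filter.Tendsto (fun t => ν₀ + U t) Filter.atTop (nhds 0) := by
  rcases lt_trichotomy (U 0) (-ν₀) with hc | hc | hc
  · -- Case A : U 0 < -ν₀, U increases to -ν₀
    have hub : ∀ t ≥ (0:ℝ), U t ≤ -ν₀ := stay_le hν hU hUneg hc.le
    have hmono : MonotoneOn U (Set.Ici 0) := by
      apply monotoneOn_of_hasDerivWithinAt_nonneg (convex_Ici 0)
        (f' := fun t => 2 * U t * (ν₀ + U t))
      · exact fun t ht => (hU t ht).continuousWithinAt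
      · intro t ht
        rw [interior_Ici] at ht ⊢
        exact (hU t ht.le).mono Set.Ioi_subset_Ici_self
      · intro t ht
        rw [interior_Ici] at ht
        have h1 := hub t ht.le
        nlinarith
    set g : ℝ → ℝ := fun t => U (max t 0) with hgdef
    have hgmono : Monotone g := fun s t hst =>
      hmono (Set.mem_Ici.2 (le_max_right _ _)) (Set.mem_Ici.2 (le_max_right _ _)) (max_le_max hst le_rfl)
    have hbdd : BddAbove (Set.range g) := by
      refine ⟨-ν₀, ?_⟩
      rintro _ ⟨t, rfl⟩
      exact hub _ (le_max_right _ _)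
    have htend := tendsto_atTop_ciSup hgmono hbdd
    have hLle : (⨆ t, g t) ≤ -ν₀ := ciSup_le (fun t => hub _ (le_max_right _ _))
    have hLge : ∀ t, g t ≤ ⨆ t, g t := fun t => le_ciSup hbdd t
    have hLeq : (⨆ t, g t) = -ν₀ := by
      by_contra hne
      set L := ⨆ t, g t with hL
      have hLlt : L < -ν₀ := lt_of_le_of_ne hLle hne
      set δ := 2 * L * (ν₀ + L) with hδ
      have hL0 : L < 0 := by linarith
      have hδpos : 0 < δ := by nlinarith
      have hdge : ∀ t ≥ (0:ℝ), δ ≤ 2 * U t * (ν₀ + U t) := by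
        intro t ht
        have h1 : U t ≤ L := by
          simpa [hgdef, max_eq_left ht] using hLge t
        nlinarith
      have hgrow := growth_lower hU hdge
      have hTpos : (0:ℝ) < -ν₀ - U 0 := by linarith
      set T := ((-ν₀) - U 0) / δ + 1 with hT
      have hT0 : (0:ℝ) ≤ T := by positivity
      have hδT : δ * T = (-ν₀ - U 0) + δ := by
        rw [hT]; field_simp [hδpos.ne']
        try ring
      have := hgrow T hT0
      have := hub T hT0
      linarith
    have htend0 : Filter.Tendsto (fun t => ν₀ + g t) Filter.atTop (nhds 0) := by
      rw [hLeq] at htend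
      have h2 := htend.const_add ν₀
      simpa using h2
    apply htend0.congr'
    filter_upwards [Filter.eventually_ge_atTop (0:ℝ)] with t ht
    show ν₀ + U (max t 0) = ν₀ + U t
    rw [max_eq_left ht]
  · -- Case B : U 0 = -ν₀, U stays at -ν₀
    have h1 := stay_le hν hU hUneg hc.le
    have h2 := stay_ge hν hU hc.ge
    have htend0 : Filter.Tendsto (fun _ : ℝ => (0:ℝ)) Filter.atTop (nhds 0) :=
      tendsto_const_nhds
    apply htend0.congr'
    filter_upwards [Filter.eventually_ge_atTop (0:ℝ)] with t ht
    have := h1 t ht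
    have := h2 t ht
    have : U t = -ν₀ := le_antisymm (h1 t ht) (h2 t ht)
    rw [this]
    ring
  · -- Case C : -ν₀ < U 0 < 0, U decreases to -ν₀
    have hlb : ∀ t ≥ (0:ℝ), -ν₀ ≤ U t := stay_ge hν hU hc.le
    have hanti : AntitoneOn U (Set.Ici 0) := by
      apply antitoneOn_of_hasDerivWithinAt_nonpos (convex_Ici 0)
        (f' := fun t => 2 * U t * (ν₀ + U t))
      · exact fun t ht => (hU t ht).continuousWithinAt
      · intro t ht
        rw [interior_Ici] at ht ⊢
        exact (hU t ht.le).mono Set.Ioi_subset_Ici_self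
      · intro t ht
        rw [interior_Ici] at ht
        have h1 := hlb t ht.le
        have h2 := hUneg t ht.le
        nlinarith
    set g : ℝ → ℝ := fun t => U (max t 0) with hgdef
    have hganti : Antitone g := fun s t hst =>
      hanti (Set.mem_Ici.2 (le_max_right _ _)) (Set.mem_Ici.2 (le_max_right _ _)) (max_le_max hst le_rfl)
    have hbdd : BddBelow (Set.range g) := by
      refine ⟨-ν₀, ?_⟩
      rintro _ ⟨t, rfl⟩
      exact hlb _ (le_max_right _ _)
    have htend := tendsto_atTop_ciInf hganti hbdd
    have hLge : -ν₀ ≤ ⨅ t, g t := le_ciInf (fun t => hlb _ (le_max_right _ _))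
    have hLle : ∀ t, (⨅ t, g t) ≤ g t := fun t => ciInf_le hbdd t
    have hLeq : (⨅ t, g t) = -ν₀ := by
      by_contra hne
      set L := ⨅ t, g t with hL
      have hLgt : -ν₀ < L := lt_of_le_of_ne hLge (Ne.symm hne)
      set δ := -(2 * U 0 * (ν₀ + L)) with hδ
      have hδpos : 0 < δ := by nlinarith
      have hdle : ∀ t ≥ (0:ℝ), 2 * U t * (ν₀ + U t) ≤ -δ := by
        intro t ht
        have h1 : L ≤ U t := by
          simpa [hgdef, max_eq_left ht] using hLle t
        have h2 : U t ≤ U 0 := hanti Set.self_mem_Ici ht ht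
        have h3 : U t ≤ 0 := hUneg t ht
        nlinarith
      have hgrow := growth_upper hU hdle
      have hTpos : (0:ℝ) < U 0 + ν₀ := by linarith
      set T := (U 0 + ν₀) / δ + 1 with hT
      have hT0 : (0:ℝ) ≤ T := by positivity
      have hδT : δ * T = (U 0 + ν₀) + δ := by
        rw [hT]; field_simp [hδpos.ne']
        try ring
      have := hgrow T hT0
      have := hlb T hT0
      linarith
    have htend0 : Filter.Tendsto (fun t => ν₀ + g t) Filter.atTop (nhds 0) := by
      rw [hLeq] at htend
      have h2 := htend.const_add ν₀
      simpa using h2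
    apply htend0.congr'
    filter_upwards [Filter.eventually_ge_atTop (0:ℝ)] with t ht
    show ν₀ + U (max t 0) = ν₀ + U t
    rw [max_eq_left ht]



/-- **Asymptotic stability of the bifurcated toral CW complex.**
For `ν₀ > 0` and all `aⱼ < 0`, every solution of the truncated normal-form
Eulerian system `ẋᵢ = −ωᵢyᵢ + u(x,y)·xᵢ`, `ẏᵢ = ωᵢxᵢ + u(x,y)·yᵢ` with
`u(x,y) = ν₀ + Σⱼ aⱼ(xⱼ² + yⱼ²)` and nonzero initial value satisfies
`u(x(t), y(t)) → 0` as `t → ∞`: the toral complex `{u = 0}` attracts all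
nonzero solutions. -/
theorem toral_set_asymptotic_stability
    (n : ℕ) (hn : 1 ≤ n) (ω a : Fin n → ℝ) (ν₀ : ℝ)
    (hν : 0 < ν₀) (ha : ∀ j, a j < 0)
    (x y : ℝ → Fin n → ℝ)
    (hx : ∀ t ≥ (0 : ℝ), ∀ i : Fin n, HasDerivWithinAt (fun s => x s i)
      (-ω i * y t i + (ν₀ + ∑ j, a j * ((x t j) ^ 2 + (y t j) ^ 2)) * x t i)
      (Set.Ici 0) t)
    (hy : ∀ t ≥ (0 : ℝ), ∀ i : Fin n, HasDerivWithinAt (fun s => y s i)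
      (ω i * x t i + (ν₀ + ∑ j, a j * ((x t j) ^ 2 + (y t j) ^ 2)) * y t i)
      (Set.Ici 0) t)
    (h0 : ¬ (x 0 = 0 ∧ y 0 = 0)) :
    Filter.Tendsto (fun t => ν₀ + ∑ j, a j * ((x t j) ^ 2 + (y t j) ^ 2))
      Filter.atTop (nhds 0) := by
  have hU : ∀ t ≥ (0:ℝ), HasDerivWithinAt
      (fun s => ∑ j, a j * ((x s j) ^ 2 + (y s j) ^ 2))
      (2 * (∑ j, a j * ((x t j) ^ 2 + (y t j) ^ 2)) *
        (ν₀ + ∑ j, a j * ((x t j) ^ 2 + (y t j) ^ 2))) (Set.Ici 0) t := by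
    intro t ht
    have h2 : ∀ j ∈ Finset.univ, HasDerivWithinAt
        (fun s => a j * ((x s j) ^ 2 + (y s j) ^ 2))
        (2 * (a j * ((x t j) ^ 2 + (y t j) ^ 2)) *
          (ν₀ + ∑ k, a k * ((x t k) ^ 2 + (y t k) ^ 2))) (Set.Ici 0) t := by
      intro j _
      have hd := (((hx t ht j).pow 2).add ((hy t ht j).pow 2)).const_mul (a j)
      refine hd.congr_deriv ?_
      push_cast
      ring
    have h3 := HasDerivWithinAt.fun_sum h2
    refine h3.congr_deriv ?_
    rw [← Finset.sum_mul, ← Finset.mul_sum]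
  have hUneg : ∀ t ≥ (0:ℝ), (∑ j, a j * ((x t j) ^ 2 + (y t j) ^ 2)) ≤ 0 := by
    intro t _
    apply Finset.sum_nonpos
    intro j _
    nlinarith [sq_nonneg (x t j), sq_nonneg (y t j), ha j]
  have hU0 : (∑ j, a j * ((x 0 j) ^ 2 + (y 0 j) ^ 2)) < 0 := by
    have h0' : ∃ j, x 0 j ≠ 0 ∨ y 0 j ≠ 0 := by
      by_contra h
      push_neg at h
      exact h0 ⟨funext fun j => (h j).1, funext fun j => (h j).2⟩
    obtain ⟨j₀, hj₀⟩ := h0'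
    have hpos : 0 < (x 0 j₀) ^ 2 + (y 0 j₀) ^ 2 := by
      rcases hj₀ with h | h
      · have h1 : (x 0 j₀) ^ 2 ≠ 0 := pow_ne_zero 2 h
        nlinarith [sq_nonneg (x 0 j₀), sq_nonneg (y 0 j₀),
          lt_of_le_of_ne (sq_nonneg (x 0 j₀)) (Ne.symm h1)]
      · have h1 : (y 0 j₀) ^ 2 ≠ 0 := pow_ne_zero 2 h
        nlinarith [sq_nonneg (x 0 j₀), sq_nonneg (y 0 j₀),
          lt_of_le_of_ne (sq_nonneg (y 0 j₀)) (Ne.symm h1)]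
    have hsum : (∑ j, a j * ((x 0 j) ^ 2 + (y 0 j) ^ 2)) < ∑ _j : Fin n, (0:ℝ) := by
      apply Finset.sum_lt_sum
      · intro j _
        nlinarith [sq_nonneg (x 0 j), sq_nonneg (y 0 j), ha j]
      · exact ⟨j₀, Finset.mem_univ _, mul_neg_of_neg_of_pos (ha j₀) hpos⟩
    simpa using hsum
  exact scalar_limit hν hU hUneg hU0
end

section
/- Let k ≥ 2, let a = (a_1, …, a_k) ∈ ℝ^k, and let A_{ij} (1 ≤ i ≤ j ≤ k) be real numbers that are all strictly positive. Define a₁, a₂, F : ℝ^k → ℝ by a₁(c) = Σ_{i=1}^k a_i c_i², a₂(c) = Σ_{1 ≤ i ≤ j ≤ k} A_{ij} c_i² c_j², and F(c) = a₁(c)²/(4·a₂(c)). Suppose c ∈ ℝ^k satisfies c_i > 0 for all i and a₁(c) ≠ 0 (note a₂(c) > 0), and suppose the Fréchet derivative of F at c vanishes. Then a_i·a_j > 0 for all i, j ∈ {1,…,k}. (Consequently, when some pair satisfies a_i a_j < 0 and all second-order coefficients have one sign, the leaf-dependent saddle-node parameter value a₁(C)²/(4a₂(C)) has no critical points on S^{k−1}_{>0},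 so its extrema ν_min and ν_max over the closed positive sphere are attained only on the boundary, as in the derivation of the cell-bifurcation variety T_{SN}.) -/
set_option maxHeartbeats 1000000 in
/-- **No critical points of the saddle-node parameter value inside the positive sphere.**
With `a₁(c) = Σᵢ aᵢcᵢ²`, `a₂(c) = Σ_{i≤j} A_{ij}cᵢ²cⱼ²` (all `A_{ij} > 0`) and
`F = a₁²/(4a₂)`, if `c` has all positive components, `a₁(c) ≠ 0`, and the Fréchet
derivative of `F` vanishes at `c`, then all the `aᵢ` have the same sign. -/
theorem saddle_node_value_no_interior_critical_points
    (k : ℕ) (hk : 2 ≤ k) (a : Fin k → ℝ) (A : Fin k → Fin k → ℝ)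
    (hA : ∀ i j : Fin k, i ≤ j → 0 < A i j)
    (c : Fin k → ℝ) (hc : ∀ i, 0 < c i)
    (h1 : (∑ i, a i * (c i) ^ 2) ≠ 0)
    (hcrit : fderiv ℝ (fun d : Fin k → ℝ =>
      (∑ i, a i * (d i) ^ 2) ^ 2 /
        (4 * ∑ i, ∑ j, if i ≤ j then A i j * (d i) ^ 2 * (d j) ^ 2 else 0)) c = 0) :
    ∀ i j : Fin k, 0 < a i * a j := by
  classical
  have hk0 : 0 < k := by omega
  set s1 : ℝ := ∑ i, a i * (c i) ^ 2 with hs1def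
  set s2 : ℝ := ∑ i, ∑ j, if i ≤ j then A i j * (c i) ^ 2 * (c j) ^ 2 else 0 with hs2def
  have hterm_nonneg : ∀ i j : Fin k, 0 ≤ (if i ≤ j then A i j * (c i) ^ 2 * (c j) ^ 2 else 0) := by
    intro i j
    split
    · have := hA i j ‹_›; positivity
    · exact le_refl 0
  have i0 : Fin k := ⟨0, hk0⟩
  have hs2 : 0 < s2 := by
    rw [hs2def]
    apply Finset.sum_pos' (fun i _ => Finset.sum_nonneg fun j _ => hterm_nonneg i j)
    refine ⟨i0, Finset.mem_univ _, ?_⟩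
    apply Finset.sum_pos' (fun j _ => hterm_nonneg i0 j)
    refine ⟨i0, Finset.mem_univ _, ?_⟩
    rw [if_pos le_rfl]
    have := hA i0 i0 le_rfl
    have := hc i0
    positivity
  set S : Fin k → ℝ := fun m => ∑ i, ∑ j, if i ≤ j then
      A i j * ((if i = m then 2 * c m else 0) * (c j) ^ 2 +
        (c i) ^ 2 * (if j = m then 2 * c m else 0)) else 0 with hSdef
  have hSterm_nonneg : ∀ m i j : Fin k, 0 ≤ (if i ≤ j then
      A i j * ((if i = m then 2 * c m else 0) * (c j) ^ 2 +
        (c i) ^ 2 * (if j = m then 2 * c m else 0)) else 0) := by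
    intro m i j
    split
    · have hAij := (hA i j ‹_›).le
      have e1 : (0:ℝ) ≤ (if i = m then 2 * c m else 0) := by
        split
        · linarith [hc m]
        · exact le_refl 0
      have e2 : (0:ℝ) ≤ (if j = m then 2 * c m else 0) := by
        split
        · linarith [hc m]
        · exact le_refl 0
      have e3 : (0:ℝ) ≤ (c j) ^ 2 := sq_nonneg _
      have e4 : (0:ℝ) ≤ (c i) ^ 2 := sq_nonneg _
      exact mul_nonneg hAij (add_nonneg (mul_nonneg e1 e3) (mul_nonneg e4 e2))
    · exact le_refl 0
  have hS : ∀ m, 0 < S m := by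
    intro m
    rw [hSdef]
    apply Finset.sum_pos' (fun i _ => Finset.sum_nonneg fun j _ => hSterm_nonneg m i j)
    refine ⟨m, Finset.mem_univ _, ?_⟩
    apply Finset.sum_pos' (fun j _ => hSterm_nonneg m m j)
    refine ⟨m, Finset.mem_univ _, ?_⟩
    rw [if_pos le_rfl, if_pos rfl]
    have := hA m m le_rfl
    have := hc m
    positivity
  have key : ∀ m : Fin k, (2 * s1 * (2 * a m * c m)) * (4 * s2) - s1 ^ 2 * (4 * S m) = 0 := by
    intro m
    set u : ℝ → (Fin k → ℝ) := fun t => Function.update c m t with hudef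
    have hu0 : u (c m) = c := Function.update_eq_self m c
    have hui : ∀ i, HasDerivAt (fun t => u t i) (if i = m then 1 else 0) (c m) := by
      intro i
      by_cases h : i = m
      · subst h
        simp only [hudef, Function.update_self, if_pos rfl]
        exact hasDerivAt_id _
      · simp only [hudef, Function.update_of_ne h, if_neg h]
        exact hasDerivAt_const _ _
    have husq : ∀ i, HasDerivAt (fun t => (u t i) ^ 2) (2 * c i * (if i = m then 1 else 0)) (c m) := by
      intro i
      have h := (hui i).fun_pow 2
      simp only [hu0] at h
      refine h.congr_deriv (Eq.symm ?_)
      norm_num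
    have hnum_inner : HasDerivAt (fun t => ∑ i, a i * (u t i) ^ 2) (2 * a m * c m) (c m) := by
      have h := HasDerivAt.fun_sum (fun i (_ : i ∈ Finset.univ) => ((husq i).const_mul (a i)))
      refine h.congr_deriv (Eq.symm ?_)
      symm
      rw [Finset.sum_congr rfl (fun i _ => by
        show a i * (2 * c i * (if i = m then 1 else 0)) = (if i = m then 2 * a m * c m else 0)
        rcases eq_or_ne i m with hi | hi
        · rw [hi, if_pos rfl, if_pos rfl]; ring
        · rw [if_neg hi, if_neg hi]; ring)]
      rw [Finset.sum_ite_eq' Finset.univ m (fun _ => 2 * a m * c m)]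
      simp
    have hnum : HasDerivAt (fun t => (∑ i, a i * (u t i) ^ 2) ^ 2) (2 * s1 * (2 * a m * c m)) (c m) := by
      have h := hnum_inner.fun_pow 2
      refine h.congr_deriv (Eq.symm ?_)
      show 2 * s1 * (2 * a m * c m) = ↑2 * (∑ i, a i * (u (c m) i) ^ 2) ^ (2 - 1) * (2 * a m * c m)
      rw [hu0]
      norm_num [hs1def]
    have hdterm : ∀ i j : Fin k, HasDerivAt
        (fun t => if i ≤ j then A i j * (u t i) ^ 2 * (u t j) ^ 2 else 0)
        (if i ≤ j then A i j * ((if i = m then 2 * c m else 0) * (c j) ^ 2 +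
          (c i) ^ 2 * (if j = m then 2 * c m else 0)) else 0) (c m) := by
      intro i j
      by_cases h : i ≤ j
      · simp only [if_pos h]
        have hmul := ((husq i).const_mul (A i j)).fun_mul (husq j)
        refine hmul.congr_deriv (Eq.symm ?_)
        show _ = A i j * (2 * c i * (if i = m then 1 else 0)) * (u (c m) j) ^ 2 +
          A i j * (u (c m) i) ^ 2 * (2 * c j * (if j = m then 1 else 0))
        rw [hu0]
        have hco : ∀ l : Fin k, (if l = m then 2 * c m else 0) = 2 * c l * (if l = m then 1 else 0) := by
          intro l
          rcases eq_or_ne l m with hl | hl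
          · rw [hl, if_pos rfl, if_pos rfl]; ring
          · rw [if_neg hl, if_neg hl]; ring
        rw [hco i, hco j]; ring
      · simp only [if_neg h]
        exact hasDerivAt_const _ _
    have hden : HasDerivAt
        (fun t => 4 * ∑ i, ∑ j, if i ≤ j then A i j * (u t i) ^ 2 * (u t j) ^ 2 else 0)
        (4 * S m) (c m) := by
      have h := (HasDerivAt.fun_sum (fun i (_ : i ∈ Finset.univ) =>
        HasDerivAt.fun_sum (fun j (_ : j ∈ Finset.univ) => hdterm i j))).const_mul (4:ℝ)
      exact h
    have hne : (4 * ∑ i, ∑ j, if i ≤ j then A i j * (u (c m) i) ^ 2 * (u (c m) j) ^ 2 else 0) ≠ 0 := by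
      rw [hu0]
      rw [← hs2def]
      positivity
    have hdirect : HasDerivAt (fun t => (∑ i, a i * (u t i) ^ 2) ^ 2 /
        (4 * ∑ i, ∑ j, if i ≤ j then A i j * (u t i) ^ 2 * (u t j) ^ 2 else 0))
        (((2 * s1 * (2 * a m * c m)) * (4 * s2) - s1 ^ 2 * (4 * S m)) / (4 * s2) ^ 2) (c m) := by
      have h := hnum.fun_div hden hne
      refine h.congr_deriv (Eq.symm ?_)
      rw [hu0, ← hs2def, ← hs1def]
    have hdiffN : DifferentiableAt ℝ (fun d : Fin k → ℝ => (∑ i, a i * (d i) ^ 2) ^ 2) c := by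
      fun_prop
    have hdiffD : DifferentiableAt ℝ (fun d : Fin k → ℝ =>
        4 * ∑ i, ∑ j, if i ≤ j then A i j * (d i) ^ 2 * (d j) ^ 2 else 0) c := by
      apply DifferentiableAt.const_mul
      apply DifferentiableAt.fun_sum
      intro i _
      apply DifferentiableAt.fun_sum
      intro j _
      by_cases h : i ≤ j
      · simp only [if_pos h]; fun_prop
      · simp only [if_neg h]; fun_prop
    have hDne : (4 * ∑ i, ∑ j, if i ≤ j then A i j * (c i) ^ 2 * (c j) ^ 2 else 0 : ℝ) ≠ 0 := by
      rw [← hs2def]; positivity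
    have hdiffF : DifferentiableAt ℝ (fun d : Fin k → ℝ =>
        (∑ i, a i * (d i) ^ 2) ^ 2 /
          (4 * ∑ i, ∑ j, if i ≤ j then A i j * (d i) ^ 2 * (d j) ^ 2 else 0)) c := by
      simp only [div_eq_mul_inv]
      exact hdiffN.mul (hdiffD.inv hDne)
    have huD : HasDerivAt u (Pi.single m 1) (c m) := by
      rw [hasDerivAt_pi]
      intro i
      have h := hui i
      refine h.congr_deriv (Eq.symm ?_)
      simp [Pi.single_apply]
    have hF' : HasFDerivAt (fun d : Fin k → ℝ =>
        (∑ i, a i * (d i) ^ 2) ^ 2 /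
          (4 * ∑ i, ∑ j, if i ≤ j then A i j * (d i) ^ 2 * (d j) ^ 2 else 0))
        (fderiv ℝ (fun d : Fin k → ℝ =>
          (∑ i, a i * (d i) ^ 2) ^ 2 /
            (4 * ∑ i, ∑ j, if i ≤ j then A i j * (d i) ^ 2 * (d j) ^ 2 else 0)) c)
        (u (c m)) := by
      rw [hu0]; exact hdiffF.hasFDerivAt
    have hchain := hF'.comp_hasDerivAt (c m) huD
    rw [hcrit] at hchain
    simp only [ContinuousLinearMap.zero_apply] at hchain
    have h2 := hdirect.unique hchain
    rcases div_eq_zero_iff.mp h2 with h | h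
    · exact h
    · exact absurd h (by positivity)
  intro i j
  have ki := key i
  have kj := key j
  rw [sub_eq_zero] at ki kj
  have hmul : ((2 * s1 * (2 * a i * c i)) * (4 * s2)) * ((2 * s1 * (2 * a j * c j)) * (4 * s2))
      = (s1 ^ 2 * (4 * S i)) * (s1 ^ 2 * (4 * S j)) := by rw [ki, kj]
  have hfin : a i * a j * (256 * (c i * c j) * (s1 ^ 2 * s2 ^ 2))
      = 16 * s1 ^ 4 * (S i * S j) := by linear_combination hmul
  have hs1sq : 0 < s1 ^ 2 := lt_of_le_of_ne (sq_nonneg s1) (Ne.symm (pow_ne_zero 2 h1))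
  have hci := hc i
  have hcj := hc j
  have hSi := hS i
  have hSj := hS j
  have hP : 0 < 256 * (c i * c j) * (s1 ^ 2 * s2 ^ 2) := by
    have h22 : 0 < s2 ^ 2 := by positivity
    exact mul_pos (mul_pos (by norm_num) (mul_pos hci hcj)) (mul_pos hs1sq h22)
  have hQ : 0 < 16 * s1 ^ 4 * (S i * S j) := by
    have h4 : 0 < s1 ^ 4 := by nlinarith
    exact mul_pos (mul_pos (by norm_num) h4) (mul_pos hSi hSj)
  nlinarith [hfin, hP, hQ, mul_pos hP hQ]
end
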